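/- Let R = (R_1,...,R_l) be an m x l^2 matrix with blocks R_q of size m x l satisfying R_q R_q^T = I_m for all q, and let B = (B_{ik}) be an l^2 x l^2 symmetric matrix with l x l blocks. Then B - R^T R is positive semidefinite if and only if B is positive semidefinite and R_i B_{ij} = R_j for all 1 <= i, j <= l. -/

import Mathlib

open Matrix

/-- Let `R = (R₁,…,R_l)` be an `m × l²` matrix with blocks `R_q` of size `m × l`
satisfying `R_q R_qᵀ = I_m`, and let `B = (B_{ik})` be an `l² × l²` symmetric matrix with
`l × l` blocks (with identity diagonal blocks). Then `B - Rᵀ R` is positive semidefinite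
iff `B` is positive semidefinite and `R_i B_{ij} = R_j` for all `i, j`. -/
theorem sub_RTR_posSemidef_iff (m l : ℕ)
    (Rblk : Fin l → Matrix (Fin m) (Fin l) ℝ)
    (hR : ∀ q, Rblk q * (Rblk q)ᵀ = 1)
    (Bblk : Fin l → Fin l → Matrix (Fin l) (Fin l) ℝ)
    (B : Matrix (Fin l × Fin l) (Fin l × Fin l) ℝ)
    (hB : B = Matrix.of fun p q => Bblk p.1 q.1 p.2 q.2)
    (hBsym : Bᵀ = B)
    (hdiag : ∀ i, Bblk i i = 1)
    (R : Matrix (Fin m) (Fin l × Fin l) ℝ)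
    (hRdef : R = Matrix.of fun α p => Rblk p.1 α p.2) :
    (B - Rᵀ * R).PosSemidef ↔
      (B.PosSemidef ∧ ∀ i j : Fin l, Rblk i * Bblk i j = Rblk j) := by
  have hsym : ∀ i j s t, Bblk i j s t = Bblk j i t s := by
    intro i j s t
    have := congr_fun (congr_fun hBsym (i, s)) (j, t)
    simpa [hB, transpose_apply] using this.symm
  have hblk : ∀ q, ∀ α β : Fin m,
      ∑ s, Rblk q α s * Rblk q β s = (1 : Matrix (Fin m) (Fin m) ℝ) α β := by
    intro q α β
    rw [← hR q]
    simp [mul_apply]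
  have hRRT : R * Rᵀ = (l : ℝ) • (1 : Matrix (Fin m) (Fin m) ℝ) := by
    ext α β
    simp only [hRdef, mul_apply, transpose_apply, of_apply, Fintype.sum_prod_type,
      Matrix.smul_apply, smul_eq_mul]
    rw [Finset.sum_congr rfl fun q _ => hblk q α β]
    simp [mul_comm]
  constructor
  · rintro hM
    have hRTR : (Rᵀ * R).PosSemidef := by
      have := posSemidef_conjTranspose_mul_self R
      rwa [conjTranspose_eq_transpose_of_trivial] at this
    have hBpsd : B.PosSemidef := by
      have hsplit : B = (B - Rᵀ * R) + Rᵀ * R := by abel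
      rw [hsplit]; exact hM.add hRTR
    refine ⟨hBpsd, fun i j => ?_⟩
    set E : Matrix (Fin l × Fin l) (Fin m) ℝ :=
      Matrix.of (fun p α => if p.1 = i then Rblk i α p.2 else 0) with hE
    have hRE : R * E = 1 := by
      ext α β
      simp only [hRdef, hE, mul_apply, of_apply, Fintype.sum_prod_type, mul_ite, mul_zero]
      rw [Finset.sum_eq_single i]
      · simpa using hblk i α β
      · intro q _ hq; simp [hq]
      · simp
    have hBE : B * E = Matrix.of (fun p α => ∑ s, Bblk p.1 i p.2 s * Rblk i α s) := by
      ext p α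
      simp only [hB, hE, mul_apply, of_apply, Fintype.sum_prod_type, mul_ite, mul_zero]
      rw [Finset.sum_eq_single i]
      · simp
      · intro q _ hq; simp [hq]
      · simp
    have hEBE : Eᵀ * (B * E) = 1 := by
      rw [hBE]
      ext α β
      simp only [hE, mul_apply, transpose_apply, of_apply, Fintype.sum_prod_type,
        ite_mul, zero_mul]
      rw [Finset.sum_eq_single i]
      · simp only [if_pos rfl]
        have hu : ∀ u, ∑ s, Bblk i i u s * Rblk i β s = Rblk i β u := by
          intro u; rw [hdiag]; simp [one_apply]
        calc ∑ u, Rblk i α u * ∑ s, Bblk i i u s * Rblk i β s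
            = ∑ u, Rblk i α u * Rblk i β u :=
              Finset.sum_congr rfl fun u _ => by rw [hu u]
          _ = (1 : Matrix (Fin m) (Fin m) ℝ) α β := hblk i α β
      · intro q _ hq; simp [hq]
      · simp
    have hEME : Eᵀ * ((B - Rᵀ * R) * E) = 0 := by
      rw [Matrix.sub_mul, Matrix.mul_assoc, hRE, Matrix.mul_one, Matrix.mul_sub, hEBE,
        ← Matrix.transpose_mul, hRE, Matrix.transpose_one, sub_self]
    obtain ⟨C, hC⟩ : ∃ C : Matrix (Fin l × Fin l) (Fin l × Fin l) ℝ, B - Rᵀ * R = Cᴴ * C := by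
      open scoped MatrixOrder in exact CStarAlgebra.nonneg_iff_eq_star_mul_self.mp hM.nonneg
    have hCE : C * E = 0 := by
      have h0 : (C * E)ᴴ * (C * E) = 0 := by
        rw [conjTranspose_mul]
        calc Eᴴ * Cᴴ * (C * E) = Eᵀ * ((Cᴴ * C) * E) := by
              rw [conjTranspose_eq_transpose_of_trivial, Matrix.mul_assoc,
                ← Matrix.mul_assoc Cᴴ C E]
        _ = 0 := by rw [← hC]; exact hEME
      exact conjTranspose_mul_self_eq_zero.mp h0
    have hME : (B - Rᵀ * R) * E = 0 := by
      rw [hC, Matrix.mul_assoc, hCE, Matrix.mul_zero]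
    have hBEeq : B * E = Rᵀ := by
      rw [Matrix.sub_mul, Matrix.mul_assoc, hRE, Matrix.mul_one, sub_eq_zero] at hME
      exact hME
    ext α t
    have h2 : ∑ s, Bblk j i t s * Rblk i α s = Rblk j α t := by
      have h0 := congr_fun (congr_fun (hBE.symm.trans hBEeq) (j, t)) α
      simpa [hRdef] using h0
    calc (Rblk i * Bblk i j) α t = ∑ s, Bblk j i t s * Rblk i α s := by
          simp_rw [mul_apply]
          exact Finset.sum_congr rfl fun s _ => by rw [hsym i j s t, mul_comm]
      _ = Rblk j α t := h2
  · rintro ⟨hBpsd, h⟩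
    rcases Nat.eq_zero_or_pos l with hl | hl
    · subst hl
      have h0 : B - Rᵀ * R = 0 := Subsingleton.elim _ _
      rw [h0]
      exact Matrix.PosSemidef.zero
    have hRB : R * B = (l : ℝ) • R := by
      ext α p
      simp only [hRdef, hB, mul_apply, of_apply, Fintype.sum_prod_type, Matrix.smul_apply, smul_eq_mul]
      have hq : ∀ q, ∑ s, Rblk q α s * Bblk q p.1 s p.2 = Rblk p.1 α p.2 := by
        intro q
        have := congr_fun (congr_fun (h q p.1) α) p.2
        simpa [mul_apply] using this
      rw [Finset.sum_congr rfl fun q _ => hq q]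
      simp [mul_comm]
    have hBRT : B * Rᵀ = (l : ℝ) • Rᵀ := by
      have := congr_arg Matrix.transpose hRB
      rwa [transpose_mul, transpose_smul, hBsym] at this
    set c : ℝ := (l : ℝ)⁻¹ with hc
    have hcl : c * (l : ℝ) = 1 := inv_mul_cancel₀ (by positivity)
    set P : Matrix (Fin l × Fin l) (Fin l × Fin l) ℝ := 1 - c • (Rᵀ * R) with hP
    have hBP : B * P = B - Rᵀ * R := by
      rw [hP, mul_sub, mul_one, mul_smul_comm, ← Matrix.mul_assoc, hBRT, Matrix.smul_mul,
        smul_smul, hcl, one_smul]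
    have h2 : Rᵀ * R * (B - Rᵀ * R) = 0 := by
      have ha : Rᵀ * R * B = (l : ℝ) • (Rᵀ * R) := by
        rw [Matrix.mul_assoc, hRB, Matrix.mul_smul]
      have hb : Rᵀ * R * (Rᵀ * R) = (l : ℝ) • (Rᵀ * R) := by
        calc Rᵀ * R * (Rᵀ * R) = Rᵀ * ((R * Rᵀ) * R) := by
              rw [Matrix.mul_assoc, ← Matrix.mul_assoc R Rᵀ R]
          _ = (l : ℝ) • (Rᵀ * R) := by
              rw [hRRT, Matrix.smul_mul, Matrix.one_mul, Matrix.mul_smul]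
      rw [mul_sub, ha, hb, sub_self]
    have key : Pᵀ * B * Pᵀᴴ = B - Rᵀ * R := by
      have hPT : Pᵀ = P := by
        rw [hP]; simp [transpose_sub, transpose_smul, transpose_mul]
      rw [conjTranspose_eq_transpose_of_trivial, transpose_transpose, hPT, mul_assoc, hBP,
        hP, sub_mul, one_mul, smul_mul_assoc, h2, smul_zero, sub_zero]
    have := hBpsd.mul_mul_conjTranspose_same Pᵀ
    rwa [key] at this
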